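/- Let (X, ω) be a symplectic vector space, i.e., a (possibly infinite-dimensional) topological vector space X with a jointly continuous antisymmetric bilinear form ω such that the induced map ω♭ : X → X', x ↦ ω(x, ·), is injective. Then every finite-dimensional linear subspace V ⊆ X satisfies V^{ωω} = V, where V^ω = {x ∈ X : ω(x, v) = 0 for all v ∈ V} denotes the symplectic orthogonal. -/

import Mathlib

/-- The symplectic orthogonal of a subspace `W` with respect to a bilinear form `ω`:
`W^ω = {x | ω(x, w) = 0 for all w ∈ W}`. -/
def symplOrth {X : Type*} [AddCommGroup X] [Module ℝ X]
    (ω : X →ₗ[ℝ] X →ₗ[ℝ] ℝ) (W : Submodule ℝ X) : Submodule ℝ X where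
  carrier := {x | ∀ w ∈ W, ω x w = 0}
  add_mem' := by
    intro a b ha hb w hw
    simp [map_add, ha w hw, hb w hw]
  zero_mem' := by
    intro w hw
    simp
  smul_mem' := by
    intro c a ha w hw
    simp [map_smul, ha w hw]

/-- The restriction map `X → Dual ℝ V'`, `y ↦ ω(y, ·)|_{V'}`, as a linear map. -/
def symplRestrict {X : Type*} [AddCommGroup X] [Module ℝ X]
    (ω : X →ₗ[ℝ] X →ₗ[ℝ] ℝ) (V' : Submodule ℝ X) : X →ₗ[ℝ] Module.Dual ℝ V' where
  toFun y := (ω y).domRestrict V'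
  map_add' a b := by ext v; simp
  map_smul' c a := by ext v; simp

/-- If `ω` is (left-)nondegenerate, the restriction map onto the dual of a
finite-dimensional subspace is surjective. -/
theorem symplRestrict_surjective {X : Type*} [AddCommGroup X] [Module ℝ X]
    (ω : X →ₗ[ℝ] X →ₗ[ℝ] ℝ)
    (hinj : ∀ x : X, (∀ y : X, ω x y = 0) → x = 0)
    (hskew : ∀ x y : X, ω x y = - ω y x)
    (V' : Submodule ℝ X) (hV' : FiniteDimensional ℝ V') :
    Function.Surjective (symplRestrict ω V') := by
  rw [← LinearMap.range_eq_top]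
  by_contra hn
  obtain ⟨φ, φne, hφ⟩ :=
    Submodule.exists_dual_map_eq_bot_of_lt_top (Ne.lt_top hn) inferInstance
  set v : V' := (Module.evalEquiv ℝ V').symm φ with hv
  have hzero : ∀ y : X, ω y (v : X) = 0 := by
    intro y
    have hmem : symplRestrict ω V' y ∈ LinearMap.range (symplRestrict ω V') :=
      LinearMap.mem_range_self _ y
    have : φ (symplRestrict ω V' y) ∈
        (LinearMap.range (symplRestrict ω V')).map φ :=
      Submodule.mem_map_of_mem hmem
    rw [hφ, Submodule.mem_bot] at this
    have heval : φ (symplRestrict ω V' y) = (symplRestrict ω V' y) v := by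
      rw [hv]
      exact (Module.apply_evalEquiv_symm_apply ℝ V' _ φ).symm
    rw [heval] at this
    simpa [symplRestrict] using this
  have hv0 : (v : X) = 0 := by
    apply hinj
    intro y
    rw [hskew]
    simp [hzero y]
  have : v = 0 := Subtype.ext hv0
  rw [hv] at this
  apply φne
  have := congrArg (Module.evalEquiv ℝ V') this
  simpa using this

/-- Every finite-dimensional subspace of a symplectic vector space is symplectically
closed: `V^{ωω} = V`. -/
theorem finiteDimensional_subspace_symplectically_closed
    {X : Type*} [AddCommGroup X] [Module ℝ X] [TopologicalSpace X]
    [IsTopologicalAddGroup X] [ContinuousSMul ℝ X] [LocallyConvexSpace ℝ X]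
    (ω : X →ₗ[ℝ] X →ₗ[ℝ] ℝ)
    (hcont : Continuous fun p : X × X => ω p.1 p.2)
    (hskew : ∀ x y : X, ω x y = - ω y x)
    (hinj : ∀ x : X, (∀ y : X, ω x y = 0) → x = 0)
    (V : Submodule ℝ X) (hV : FiniteDimensional ℝ V) :
    symplOrth ω (symplOrth ω V) = V := by
  apply le_antisymm
  · -- hard direction
    intro x hx
    by_contra hxV
    -- enlarge V by x
    set V' : Submodule ℝ X := V ⊔ (ℝ ∙ x) with hV'def
    have hVle : V ≤ V' := le_sup_left
    have hxV' : x ∈ V' := Submodule.mem_sup_right (Submodule.mem_span_singleton_self x)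
    have hV' : FiniteDimensional ℝ V' := by
      have : FiniteDimensional ℝ (ℝ ∙ x) := by infer_instance
      exact Submodule.finiteDimensional_sup V (ℝ ∙ x)
    -- V viewed inside V'
    set p : Submodule ℝ V' := V.comap V'.subtype with hp
    have hxp : (⟨x, hxV'⟩ : V') ∉ p := by
      simpa [hp] using hxV
    obtain ⟨f, hfx, hfV⟩ := Submodule.exists_dual_map_eq_bot_of_notMem hxp inferInstance
    obtain ⟨w, hw⟩ := symplRestrict_surjective ω hinj hskew V' hV' f
    have hwV : w ∈ symplOrth ω V := by
      intro v hv
      have hvp : (⟨v, hVle hv⟩ : V') ∈ p := by simpa [hp] using hv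
      have : f ⟨v, hVle hv⟩ ∈ p.map f := Submodule.mem_map_of_mem hvp
      rw [hfV, Submodule.mem_bot] at this
      have hwf : (symplRestrict ω V' w) ⟨v, hVle hv⟩ = f ⟨v, hVle hv⟩ := by rw [hw]
      have : ω w v = 0 := by
        rw [← this]
        exact hwf
      exact this
    have hxw : ω x w = 0 := hx w hwV
    apply hfx
    have : (symplRestrict ω V' w) ⟨x, hxV'⟩ = ω w x := rfl
    rw [← hw] at *
    calc (symplRestrict ω V' w) ⟨x, hxV'⟩ = ω w x := rfl
      _ = - ω x w := hskew w x
      _ = 0 := by rw [hxw, neg_zero]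
  · -- easy direction: V ⊆ V^{ωω}
    intro v hv w hw
    rw [hskew]
    simp [hw v hv]
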